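/- arXiv:1806.05107 — 3 statements merged into one kernel-verified Lean document; each statement's English description precedes it below -/
import Mathlib

section
/- Let Γ be the simplicial complex on vertex set {v_1,...,v_r} (r ≥ 4) whose facets are the sets V \ {v_i, v_j} where {v_i, v_j} ranges over pairs of non-consecutive vertices modulo r. Then the f-vector of Γ satisfies f_{-1} = 1, f_i = binomial(r, i+1) for 0 ≤ i ≤ r-4, and f_{r-3} = r(r-3)/2. -/
open Finset

/-! # Abstract simplicial complexes on vertex set `Fin n` -/

/-- A (nonempty) abstract simplicial complex on vertex set `Fin n`:
a collection of finite subsets containing `∅` and closed under taking subsets. -/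
def IsComplex {n : ℕ} (Δ : Set (Finset (Fin n))) : Prop :=
  ∅ ∈ Δ ∧ ∀ F ∈ Δ, ∀ G ⊆ F, G ∈ Δ

/-- The link of a face `F`. -/
def link {n : ℕ} (Δ : Set (Finset (Fin n))) (F : Finset (Fin n)) : Set (Finset (Fin n)) :=
  {G | Disjoint F G ∧ F ∪ G ∈ Δ}

/-- The dimension of a simplicial complex, as an integer (`-1` for the void/empty complex). -/
noncomputable def dimC {n : ℕ} (Δ : Set (Finset (Fin n))) : ℤ :=
  sSup ((fun F : Finset (Fin n) => (F.card : ℤ) - 1) '' Δ)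

/-- `Δ` is pure with all facets of cardinality `d` (i.e. pure of dimension `d-1`):
there is a face of cardinality `d` and every face is contained in one. -/
def IsPure {n : ℕ} (Δ : Set (Finset (Fin n))) (d : ℕ) : Prop :=
  (∃ F ∈ Δ, F.card = d) ∧ ∀ F ∈ Δ, ∃ G ∈ Δ, F ⊆ G ∧ G.card = d

/-- The Alexander dual `Δ^∨ = {F : [n] \ F ∉ Δ}`. -/
def dualC {n : ℕ} (Δ : Set (Finset (Fin n))) : Set (Finset (Fin n)) :=
  {F | Fᶜ ∉ Δ}

/-! ## Simplicial (reduced, augmented) chain complex and reduced homology -/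

variable (K : Type) [Field K]

/-- The space of `k`-chains: formal `K`-linear combinations of faces of cardinality `k`
(`k = 0` gives the span of the empty face, playing the role of the augmentation). -/
abbrev Chains {n : ℕ} (Δ : Set (Finset (Fin n))) (k : ℕ) : Type :=
  {F : Finset (Fin n) // F ∈ Δ ∧ F.card = k} →₀ K

/-- The boundary of a single face of cardinality `k+1`. -/
noncomputable def boundaryElt {n : ℕ} (Δ : Set (Finset (Fin n))) (k : ℕ)
    (F : {F : Finset (Fin n) // F ∈ Δ ∧ F.card = k + 1}) : Chains K Δ k :=
  ∑ v ∈ F.1.attach, open Classical in if h : F.1.erase v.1 ∈ Δ then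
      ((-1 : K) ^ (F.1.filter (fun w => w < v.1)).card) •
        Finsupp.single ⟨F.1.erase v.1,
          ⟨h, by simp [Finset.card_erase_of_mem v.2, F.2.2]⟩⟩ 1
    else 0

/-- The simplicial boundary map from `(k+1)`-chains to `k`-chains
(for `k = 0` this is the augmentation map). -/
noncomputable def boundaryMap {n : ℕ} (Δ : Set (Finset (Fin n))) (k : ℕ) :
    Chains K Δ (k + 1) →ₗ[K] Chains K Δ k :=
  Finsupp.lsum K fun F => LinearMap.toSpanSingleton K _ (boundaryElt K Δ k F)

/-- Vanishing of the `i`-th reduced simplicial homology of `Δ` with coefficients in `K`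
(`i : ℤ`; for `i ≤ -2` the homology is trivially zero, `i = -1` concerns the augmentation). -/
noncomputable def ReducedHomologyZero {n : ℕ} (Δ : Set (Finset (Fin n))) (i : ℤ) : Prop :=
  if i ≤ -2 then True
  else if i = -1 then Function.Surjective (boundaryMap K Δ 0)
  else LinearMap.ker (boundaryMap K Δ i.toNat) ≤ LinearMap.range (boundaryMap K Δ (i.toNat + 1))

/-! ## Cohen–Macaulay complexes (Reisner's criterion) and relatives -/

/-- `Δ` is Cohen–Macaulay over `K` (by Reisner's criterion). -/
noncomputable def IsCMComplex {n : ℕ} (Δ : Set (Finset (Fin n))) : Prop :=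
  IsComplex Δ ∧ ∀ F ∈ Δ, ∀ i : ℤ, i < dimC (link Δ F) → ReducedHomologyZero K (link Δ F) i

/-- `Δ` is `CMₜ` over `K` with facets of cardinality `d`: it is pure and the link of every
face of cardinality at least `t` is Cohen–Macaulay. -/
noncomputable def IsCMt {n : ℕ} (Δ : Set (Finset (Fin n))) (d t : ℕ) : Prop :=
  IsComplex Δ ∧ IsPure Δ d ∧ ∀ F ∈ Δ, t ≤ F.card → IsCMComplex K (link Δ F)

/-- `Δ` is Buchsbaum over `K` with facets of cardinality `d`: pure, and
`H̃ᵢ(link F; K) = 0` for every nonempty face `F` and `i < dim link F`. -/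
noncomputable def IsBuchsbaum {n : ℕ} (Δ : Set (Finset (Fin n))) (d : ℕ) : Prop :=
  IsComplex Δ ∧ IsPure Δ d ∧ ∀ F ∈ Δ, F ≠ ∅ →
    ∀ i : ℤ, i < dimC (link Δ F) → ReducedHomologyZero K (link Δ F) i

/-- Serre's condition `S_r`: `H̃ᵢ(link F; K) = 0` for all faces `F` and all
`i < min (r-1) (dim link F)`. -/
noncomputable def SerreS {n : ℕ} (Δ : Set (Finset (Fin n))) (r : ℤ) : Prop :=
  ∀ F ∈ Δ, ∀ i : ℤ, i < min (r - 1) (dimC (link Δ F)) → ReducedHomologyZero K (link Δ F) i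
/-! ## Polynomial rings, Stanley–Reisner ideals, graded Betti numbers, depth -/

/-- The polynomial ring `K[x_1,…,x_n]`. -/
abbrev PolyR (K : Type) [Field K] (n : ℕ) := MvPolynomial (Fin n) K

/-- The Stanley–Reisner ideal `I_Δ`, generated by the monomials supported on non-faces. -/
noncomputable def srIdeal {n : ℕ} (Δ : Set (Finset (Fin n))) : Ideal (PolyR K n) :=
  Ideal.span ((fun F : Finset (Fin n) => ∏ i ∈ F, MvPolynomial.X i) '' {F | F ∉ Δ})

section Koszul

variable (n : ℕ) (M : Type) [AddCommGroup M] [Module (PolyR K n) M]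
  [Module K M] [IsScalarTower K (PolyR K n) M]

/-- The `i`-th term `M ⊗ Λⁱ(Kⁿ)` of the Koszul complex of `x_1,…,x_n` with values in `M`,
realized as finitely supported families indexed by `i`-subsets of `[n]`. -/
abbrev KChains (i : ℕ) : Type := {S : Finset (Fin n) // S.card = i} →₀ M

/-- Multiplication by the variable `x_v`, as a `K`-linear endomorphism of `M`. -/
noncomputable def smulX (v : Fin n) : M →ₗ[K] M where
  toFun m := (MvPolynomial.X v : PolyR K n) • m
  map_add' a b := smul_add _ a b
  map_smul' c m := smul_comm (MvPolynomial.X v : PolyR K n) c m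

/-- Koszul differential on a basis element. -/
noncomputable def kdElt (i : ℕ) (S : {S : Finset (Fin n) // S.card = i + 1}) :
    M →ₗ[K] KChains n M i :=
  ∑ v ∈ S.1.attach, ((-1 : K) ^ ((S.1.filter (fun w => w < v.1)).card)) •
    ((Finsupp.lsingle (M := M) ⟨S.1.erase v.1, by
        simp [Finset.card_erase_of_mem v.2, S.2]⟩).comp (smulX K n M v.1))

/-- The Koszul differential `M ⊗ Λ^{i+1} → M ⊗ Λ^i` for the sequence `x_1,…,x_n`. -/
noncomputable def kd (i : ℕ) : KChains n M (i + 1) →ₗ[K] KChains n M i :=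
  Finsupp.lsum K fun S => kdElt K n M i S

/-- The Koszul differential leaving homological degree `i` (the zero map for `i = 0`). -/
noncomputable def kdOut : ∀ i : ℕ, KChains n M i →ₗ[K] KChains n M (i - 1)
  | 0 => 0
  | (i + 1) => kd K n M i

/-- The internal-degree-`j` part of the `i`-th Koszul chain module, with respect to a
grading `g` of `M` by `K`-subspaces (`e_S ⊗ m` has degree `|S| + deg m`). -/
def KCdeg (g : ℤ → Submodule K M) (i : ℕ) (j : ℤ) : Submodule K (KChains n M i) where
  carrier := {f | ∀ S, f S ∈ g (j - i)}
  add_mem' := fun hf hg S => by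
    rw [Finsupp.add_apply]; exact add_mem (hf S) (hg S)
  zero_mem' := fun S => by rw [Finsupp.zero_apply]; exact zero_mem _
  smul_mem' := fun c f hf S => by
    rw [Finsupp.smul_apply]; exact Submodule.smul_mem _ c (hf S)

/-- Vanishing of the graded Betti number `β_{i,j}(M) = dim_K Tor_i(M,K)_j`, expressed via
the Koszul complex of `x_1,…,x_n`: every internal-degree-`j` cycle in homological degree `i`
is a boundary. -/
noncomputable def BettiZero (g : ℤ → Submodule K M) (i : ℕ) (j : ℤ) : Prop :=
  ∀ f ∈ KCdeg K n M g i j, kdOut K n M i f = 0 → f ∈ LinearMap.range (kd K n M i)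

end Koszul

/-- The grading of a homogeneous ideal `I ⊆ K[x_1,…,x_n]` by `K`-subspaces. -/
noncomputable def idealGrading {n : ℕ} (I : Ideal (PolyR K n)) (j : ℤ) : Submodule K ↥I :=
  Submodule.comap ((Submodule.subtype I).restrictScalars K)
    (if 0 ≤ j then Submodule.restrictScalars K
        (MvPolynomial.homogeneousSubmodule (Fin n) K j.toNat) else ⊥)

/-- The grading of the quotient `K[x_1,…,x_n]/I` by a homogeneous ideal. -/
noncomputable def quotGrading {n : ℕ} (I : Ideal (PolyR K n)) (j : ℤ) :
    Submodule K (PolyR K n ⧸ I) :=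
  Submodule.map ((Submodule.mkQ I).restrictScalars K)
    (if 0 ≤ j then Submodule.restrictScalars K
        (MvPolynomial.homogeneousSubmodule (Fin n) K j.toNat) else ⊥)

/-- The Green–Lazarsfeld property `N_{e,p}` for a homogeneous ideal `I`:
`I` is generated in degree `e` and `β_{i,j}(I) = 0` for all `i < p` and `j ≠ i + e`. -/
noncomputable def PropertyN {n : ℕ} (I : Ideal (PolyR K n)) (e : ℕ) (p : ℤ) : Prop :=
  I = Ideal.span {f | f ∈ I ∧ MvPolynomial.IsHomogeneous f e} ∧
  ∀ (i : ℕ) (j : ℤ), (i : ℤ) < p → j ≠ (i : ℤ) + e →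
    BettiZero K n ↥I (idealGrading K I) i j

/-- The graded maximal ideal `(x_1,…,x_n)`. -/
noncomputable def maxIdeal (n : ℕ) : Ideal (PolyR K n) :=
  Ideal.span (Set.range MvPolynomial.X)

/-- `depth M ≥ k`: there exists an `M`-regular sequence of length at least `k` inside
the graded maximal ideal `(x_1,…,x_n)`. -/
noncomputable def DepthGE {n : ℕ} (M : Type) [AddCommGroup M] [Module (PolyR K n) M]
    (k : ℤ) : Prop :=
  ∃ rs : List (PolyR K n), k ≤ (rs.length : ℤ) ∧ (∀ r ∈ rs, r ∈ maxIdeal K n) ∧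
    RingTheory.Sequence.IsRegular M rs

/-- The Stanley–Reisner ring `K[Δ]`. -/
abbrev SRRing {n : ℕ} (Δ : Set (Finset (Fin n))) : Type := PolyR K n ⧸ srIdeal K Δ
/-! ## Graphs, cycles, chords, clique complexes, f-vectors -/

/-- The clique complex of a graph: faces are the (finite) cliques. -/
def cliqueComplexC {V : Type} (G : SimpleGraph V) : Set (Finset V) :=
  {F | G.IsClique ↑F}

/-- The 1-skeleton of a simplicial complex, as a simple graph. -/
def oneSkeleton {n : ℕ} (Δ : Set (Finset (Fin n))) : SimpleGraph (Fin n) where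
  Adj a b := a ≠ b ∧ ({a, b} : Finset (Fin n)) ∈ Δ
  symm := ⟨fun a b h => ⟨h.1.symm, by rw [Finset.pair_comm]; exact h.2⟩⟩
  loopless := ⟨fun a h => h.1 rfl⟩

/-- A cycle (walk) has a chord: an edge of `G` joining two vertices of the cycle
which is not an edge of the cycle. -/
def HasChord {V : Type} {G : SimpleGraph V} {v : V} (c : G.Walk v v) : Prop :=
  ∃ a b, a ∈ c.support ∧ b ∈ c.support ∧ G.Adj a b ∧ s(a, b) ∉ c.edges

/-- Every cycle of `G` of length at most `r` (and at least `4`, so that a chord can exist)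
has a chord. -/
def ChordalUpTo {V : Type} (G : SimpleGraph V) (r : ℕ) : Prop :=
  ∀ ⦃v : V⦄ (c : G.Walk v v), c.IsCycle → 4 ≤ c.length → c.length ≤ r → HasChord c

/-- `G` is chordal: every cycle of length at least 4 has a chord. -/
def IsChordalGraph {V : Type} (G : SimpleGraph V) : Prop :=
  ∀ ⦃v : V⦄ (c : G.Walk v v), c.IsCycle → 4 ≤ c.length → HasChord c

/-- `G` is bipartite. -/
def IsBipartite {V : Type} (G : SimpleGraph V) : Prop :=
  ∃ f : V → Bool, ∀ a b, G.Adj a b → f a ≠ f b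

/-- The cycle graph on `m` vertices. -/
def cycleGraph (m : ℕ) : SimpleGraph (Fin m) where
  Adj a b := a ≠ b ∧ ((a.val + 1) % m = b.val ∨ (b.val + 1) % m = a.val)
  symm := ⟨fun a b h => ⟨h.1.symm, h.2.symm⟩⟩
  loopless := ⟨fun a h => h.1 rfl⟩

/-- The edge ideal `I(G)` of a graph on `[n]`. -/
noncomputable def edgeIdeal {n : ℕ} (G : SimpleGraph (Fin n)) : Ideal (PolyR K n) :=
  Ideal.span {f | ∃ a b, G.Adj a b ∧ f = MvPolynomial.X a * MvPolynomial.X b}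

/-- A homogeneous ideal generated in degree `e` has a linear resolution:
`β_{i,j} = 0` whenever `j ≠ i + e`. -/
noncomputable def HasLinearResolution {n : ℕ} (I : Ideal (PolyR K n)) (e : ℕ) : Prop :=
  I = Ideal.span {f | f ∈ I ∧ MvPolynomial.IsHomogeneous f e} ∧
  ∀ (i : ℕ) (j : ℤ), j ≠ (i : ℤ) + e → BettiZero K n ↥I (idealGrading K I) i j

/-- The number of faces of `Δ` of cardinality `k` (so `faceCount Δ k = f_{k-1}`). -/
noncomputable def faceCount {n : ℕ} (Δ : Set (Finset (Fin n))) (k : ℕ) : ℕ :=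
  Set.ncard {F | F ∈ Δ ∧ F.card = k}

/-- The set of facets (maximal faces) of `Δ`. -/
def facetSet {n : ℕ} (Δ : Set (Finset (Fin n))) : Set (Finset (Fin n)) :=
  {F | F ∈ Δ ∧ ∀ G ∈ Δ, F ⊆ G → F = G}

/-- The complex on the vertices of the `r`-cycle whose facets are the complements
`V(C) \ {i, j}` of the non-adjacent (non-consecutive) pairs of vertices of the cycle. -/
def GammaC (r : ℕ) : Set (Finset (Fin r)) :=
  {G | ∃ i j : Fin r, i ≠ j ∧ ¬ (cycleGraph r).Adj i j ∧ G ⊆ ({i, j} : Finset (Fin r))ᶜ}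

private lemma gamma_mod_fact (r x : ℕ) (hx : x < r) :
    ((x + 1) % r = x + 1 ∧ x + 1 < r) ∨ (x + 1 = r ∧ (x + 1) % r = 0) := by
  rcases Nat.lt_or_ge (x + 1) r with h | h
  · exact Or.inl ⟨Nat.mod_eq_of_lt h, h⟩
  · have hxr : x + 1 = r := by omega
    exact Or.inr ⟨hxr, by rw [hxr, Nat.mod_self]⟩

private lemma gamma_exists_nonadj {r : ℕ} (hr : 4 ≤ r) {a b c : Fin r}
    (hab : a ≠ b) (hac : a ≠ c) (hbc : b ≠ c) :
    (¬ (cycleGraph r).Adj a b) ∨ (¬ (cycleGraph r).Adj a c) ∨ (¬ (cycleGraph r).Adj b c) := by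
  by_contra h
  push_neg at h
  obtain ⟨h1, h2, h3⟩ := h
  simp only [cycleGraph] at h1 h2 h3
  have ha := a.isLt; have hb := b.isLt; have hc := c.isLt
  have hab' : a.val ≠ b.val := fun h => hab (Fin.ext h)
  have hac' : a.val ≠ c.val := fun h => hac (Fin.ext h)
  have hbc' : b.val ≠ c.val := fun h => hbc (Fin.ext h)
  have fa := gamma_mod_fact r a.val ha
  have fb := gamma_mod_fact r b.val hb
  have fc := gamma_mod_fact r c.val hc
  obtain ⟨-, h1⟩ := h1; obtain ⟨-, h2⟩ := h2; obtain ⟨-, h3⟩ := h3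
  omega

private lemma gamma_mem_of_card_le {r : ℕ} (hr : 4 ≤ r) {F : Finset (Fin r)}
    (hF : F.card ≤ r - 3) : F ∈ GammaC r := by
  have hcompl : 2 < Fᶜ.card := by
    rw [Finset.card_compl, Fintype.card_fin]
    have := F.card_le_univ
    rw [Fintype.card_fin] at this
    omega
  obtain ⟨a, b, c, ha, hb, hc, hab, hac, hbc⟩ := Finset.two_lt_card_iff.mp hcompl
  have hsub : ∀ i j : Fin r, i ∈ Fᶜ → j ∈ Fᶜ → F ⊆ ({i, j} : Finset (Fin r))ᶜ := by
    intro i j hi hj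
    rw [Finset.subset_compl_comm]
    intro x hx
    rcases Finset.mem_insert.mp hx with rfl | hx
    · exact hi
    · rw [Finset.mem_singleton] at hx; subst hx; exact hj
  rcases gamma_exists_nonadj hr hab hac hbc with h | h | h
  · exact ⟨a, b, hab, h, hsub a b ha hb⟩
  · exact ⟨a, c, hac, h, hsub a c ha hc⟩
  · exact ⟨b, c, hbc, h, hsub b c hb hc⟩

/-- The successor map on `Fin r`. -/
private def gammaS {r : ℕ} (hr : 4 ≤ r) (i : Fin r) : Fin r :=
  ⟨(i.val + 1) % r, Nat.mod_lt _ (by omega)⟩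

private lemma gammaS_ne {r : ℕ} (hr : 4 ≤ r) (i : Fin r) : gammaS hr i ≠ i := by
  intro h
  have hv := congrArg Fin.val h
  simp only [gammaS] at hv
  have hi := i.isLt
  have fi := gamma_mod_fact r i.val hi
  omega

/-- The `f`-vector of the complex generated by the complements of the non-consecutive
vertex pairs of an `r`-cycle (`r ≥ 4`): `f_{-1} = 1`, `f_i = C(r, i+1)` for
`0 ≤ i ≤ r-4` (i.e. all subsets of cardinality `≤ r-3` are faces), and
`f_{r-3} = r(r-3)/2`. -/
theorem cycle_link_complex_f_vector (r : ℕ) (hr : 4 ≤ r) :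
    faceCount (GammaC r) 0 = 1 ∧
    (∀ k : ℕ, 1 ≤ k → k ≤ r - 3 → faceCount (GammaC r) k = r.choose k) ∧
    faceCount (GammaC r) (r - 2) = r * (r - 3) / 2 := by
  classical
  refine ⟨?_, ?_, ?_⟩
  · -- faceCount 0 = 1
    have h0 : {F : Finset (Fin r) | F ∈ GammaC r ∧ F.card = 0} = {∅} := by
      ext F
      simp only [Set.mem_setOf_eq, Set.mem_singleton_iff, Finset.card_eq_zero]
      constructor
      · rintro ⟨_, h⟩; exact h
      · rintro rfl
        exact ⟨gamma_mem_of_card_le hr (by simp), rfl⟩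
    rw [faceCount, h0, Set.ncard_singleton]
  · -- middle degrees
    intro k hk1 hk2
    have hset : {F : Finset (Fin r) | F ∈ GammaC r ∧ F.card = k} =
        ↑(Finset.powersetCard k (Finset.univ : Finset (Fin r))) := by
      ext F
      simp only [Set.mem_setOf_eq, Finset.mem_coe, Finset.mem_powersetCard,
        Finset.subset_univ, true_and]
      constructor
      · rintro ⟨_, h⟩; exact h
      · intro h
        exact ⟨gamma_mem_of_card_le hr (by omega), h⟩
    rw [faceCount, hset, Set.ncard_coe_finset, Finset.card_powersetCard,
      Finset.card_univ, Fintype.card_fin]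
  · -- top degree
    set s : Fin r → Fin r := gammaS hr with hs
    have hsval : ∀ i : Fin r, (s i).val = (i.val + 1) % r := fun i => rfl
    -- adjacency characterization
    have hadj : ∀ i j : Fin r, (cycleGraph r).Adj i j ↔ (i ≠ j ∧ (j = s i ∨ i = s j)) := by
      intro i j
      simp only [cycleGraph]
      constructor
      · rintro ⟨hij, h | h⟩
        · exact ⟨hij, Or.inl (Fin.ext (by rw [hsval]; exact h)).symm⟩
        · exact ⟨hij, Or.inr (Fin.ext (by rw [hsval]; exact h)).symm⟩
      · rintro ⟨hij, h | h⟩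
        · exact ⟨hij, Or.inl (by rw [h, hsval])⟩
        · exact ⟨hij, Or.inr (by rw [h, hsval])⟩
    -- the set of "edges" of the cycle, as pairs
    set E : Finset (Finset (Fin r)) :=
      Finset.image (fun i : Fin r => ({i, s i} : Finset (Fin r))) Finset.univ with hE
    have hinj : Function.Injective (fun i : Fin r => ({i, s i} : Finset (Fin r))) := by
      intro i j h
      simp only at h
      have hi : i ∈ ({j, s j} : Finset (Fin r)) := by
        rw [← h]; exact Finset.mem_insert_self _ _
      have hsi : s i ∈ ({j, s j} : Finset (Fin r)) := by
        rw [← h]; simp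
      simp only [Finset.mem_insert, Finset.mem_singleton] at hi hsi
      have hii := i.isLt; have hjj := j.isLt
      have fi := gamma_mod_fact r i.val hii
      have fj := gamma_mod_fact r j.val hjj
      rcases hi with rfl | hi
      · rfl
      · have h1 : i.val = (j.val + 1) % r := by rw [hi, hsval]
        rcases hsi with hsi | hsi
        · -- s i = j
          have h2 : j.val = (i.val + 1) % r := by rw [← hsi, hsval]
          exact Fin.ext (by omega)
        · -- s i = s j
          have h2 : (i.val + 1) % r = (j.val + 1) % r := by
            rw [← hsval, ← hsval, hsi]
          exact Fin.ext (by omega)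
    have hEcard : E.card = r := by
      rw [hE, Finset.card_image_of_injective _ hinj, Finset.card_univ, Fintype.card_fin]
    have hEsub : E ⊆ Finset.powersetCard 2 (Finset.univ : Finset (Fin r)) := by
      intro p hp
      rw [hE, Finset.mem_image] at hp
      obtain ⟨i, _, rfl⟩ := hp
      rw [Finset.mem_powersetCard]
      exact ⟨Finset.subset_univ _, Finset.card_pair (gammaS_ne hr i).symm⟩
    -- membership in E iff adjacent
    have hmemE : ∀ i j : Fin r, i ≠ j → (({i, j} : Finset (Fin r)) ∈ E ↔ (cycleGraph r).Adj i j) := by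
      intro i j hij
      rw [hE, Finset.mem_image]
      constructor
      · rintro ⟨a, _, hpair⟩
        have hai : a ∈ ({i, j} : Finset (Fin r)) := by
          rw [← hpair]; exact Finset.mem_insert_self _ _
        have hsa : s a ∈ ({i, j} : Finset (Fin r)) := by
          rw [← hpair]; simp
        simp only [Finset.mem_insert, Finset.mem_singleton] at hai hsa
        rw [hadj]
        rcases hai with rfl | rfl
        · rcases hsa with hsa | hsa
          · exact absurd hsa (gammaS_ne hr a)
          · exact ⟨hij, Or.inl hsa.symm⟩
        · rcases hsa with hsa | hsa
          · exact ⟨hij, Or.inr hsa.symm⟩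
          · exact absurd hsa (gammaS_ne hr a)
      · intro h
        rw [hadj] at h
        rcases h.2 with h2 | h2
        · exact ⟨i, Finset.mem_univ _, by rw [← h2]⟩
        · exact ⟨j, Finset.mem_univ _, by rw [← h2, Finset.pair_comm]⟩
    set P : Finset (Finset (Fin r)) :=
      Finset.powersetCard 2 (Finset.univ : Finset (Fin r)) \ E with hP
    have hPcard : P.card = r.choose 2 - r := by
      rw [hP, Finset.card_sdiff_of_subset hEsub, Finset.card_powersetCard, Finset.card_univ,
        Fintype.card_fin, hEcard]
    -- the set of top faces is the image of P under complementation
    have hset : {F : Finset (Fin r) | F ∈ GammaC r ∧ F.card = r - 2} =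
        (fun p : Finset (Fin r) => pᶜ) '' ↑P := by
      ext F
      simp only [Set.mem_setOf_eq, Set.mem_image, Finset.mem_coe]
      constructor
      · rintro ⟨⟨i, j, hij, hnadj, hsub⟩, hcard⟩
        have hpc : (({i, j} : Finset (Fin r))ᶜ).card = r - 2 := by
          rw [Finset.card_compl, Fintype.card_fin, Finset.card_pair hij]
        have hFeq : F = ({i, j} : Finset (Fin r))ᶜ :=
          Finset.eq_of_subset_of_card_le hsub (by omega)
        refine ⟨{i, j}, ?_, hFeq.symm⟩
        rw [hP, Finset.mem_sdiff, Finset.mem_powersetCard]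
        refine ⟨⟨Finset.subset_univ _, Finset.card_pair hij⟩, ?_⟩
        intro hmem
        exact hnadj ((hmemE i j hij).mp hmem)
      · rintro ⟨p, hp, rfl⟩
        rw [hP, Finset.mem_sdiff, Finset.mem_powersetCard] at hp
        obtain ⟨⟨_, hcard2⟩, hnotE⟩ := hp
        obtain ⟨i, j, hij, rfl⟩ := Finset.card_eq_two.mp hcard2
        refine ⟨⟨i, j, hij, ?_, subset_rfl⟩, ?_⟩
        · intro hadj'
          exact hnotE ((hmemE i j hij).mpr hadj')
        · rw [Finset.card_compl, Fintype.card_fin, Finset.card_pair hij]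
    rw [faceCount, hset,
      Set.ncard_image_of_injective _ (compl_injective : Function.Injective
        (fun p : Finset (Fin r) => pᶜ)), Set.ncard_coe_finset, hPcard]
    -- arithmetic
    obtain ⟨m, rfl⟩ : ∃ m, r = m + 4 := ⟨r - 4, by omega⟩
    rw [Nat.choose_two_right, show m + 4 - 1 = m + 3 from by omega,
      show m + 4 - 3 = m + 1 from by omega]
    have h1 : (m + 4) * (m + 3) = (m + 4) * (m + 1) + 2 * (m + 4) := by ring
    omega
end

section
/- Let Δ be a pure (d-1)-dimensional simplicial complex on n vertices. If Δ satisfies Serre's condition S_r, then Δ is CM_{d-r}. -/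
open Finset

/-! ## Simplicial (reduced, augmented) chain complex and reduced homology -/

variable (K : Type) [Field K]

lemma link_isComplex {n : ℕ} {Δ : Set (Finset (Fin n))} (hc : IsComplex Δ)
    {F : Finset (Fin n)} (hF : F ∈ Δ) : IsComplex (link Δ F) := by
  constructor
  · exact ⟨Finset.disjoint_empty_right F, by simpa using hF⟩
  · rintro G ⟨hd, hu⟩ G' hsub
    exact ⟨hd.mono_right hsub, hc.2 _ hu _ (Finset.union_subset_union_right hsub)⟩

lemma link_link {n : ℕ} {Δ : Set (Finset (Fin n))} {F G : Finset (Fin n)}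
    (hG : G ∈ link Δ F) : link (link Δ F) G = link Δ (F ∪ G) := by
  ext H
  simp only [link, Set.mem_setOf_eq, Finset.disjoint_union_left,
    Finset.disjoint_union_right, Finset.union_assoc]
  constructor
  · rintro ⟨h1, ⟨hFG, hFH⟩, h3⟩; exact ⟨⟨hFH, h1⟩, h3⟩
  · rintro ⟨⟨hFH, hGH⟩, h3⟩; exact ⟨hGH, ⟨hG.1, hFH⟩, h3⟩

lemma dim_link_le {n d : ℕ} {Δ : Set (Finset (Fin n))} (hp : IsPure Δ d)
    {F : Finset (Fin n)} (hF : F ∈ Δ) :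
    dimC (link Δ F) ≤ (d : ℤ) - F.card - 1 := by
  apply csSup_le
  · exact ⟨-1, ∅, ⟨Finset.disjoint_empty_right F, by simpa using hF⟩, by simp⟩
  · rintro x ⟨H, ⟨hd, hu⟩, rfl⟩
    dsimp only
    obtain ⟨G, hG, hsub, hcard⟩ := hp.2 _ hu
    have h1 : F.card + H.card ≤ d := by
      rw [← Finset.card_union_of_disjoint hd, ← hcard]
      exact Finset.card_le_card hsub
    have : (F.card : ℤ) + H.card ≤ d := by exact_mod_cast h1
    omega

/-- A pure `(d-1)`-dimensional complex satisfying Serre's condition `S_r` is `CM_{d-r}`. -/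
theorem serre_implies_CMt (K : Type) [Field K] {n d : ℕ}
    (Δ : Set (Finset (Fin n))) (hc : IsComplex Δ) (hp : IsPure Δ d) (r : ℕ)
    (hS : SerreS K Δ (r : ℤ)) :
    IsCMt K Δ d (d - r) := by
  refine ⟨hc, hp, ?_⟩
  intro F hF hcard
  refine ⟨link_isComplex hc hF, ?_⟩
  intro G hG i hi
  rw [link_link hG] at hi ⊢
  have hFG : F ∪ G ∈ Δ := hG.2
  have hdim : dimC (link Δ (F ∪ G)) ≤ (d : ℤ) - (F ∪ G).card - 1 := dim_link_le hp hFG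
  apply hS _ hFG
  refine lt_min ?_ hi
  have h2 : (F.card : ℤ) ≤ ((F ∪ G).card : ℤ) := by
    exact_mod_cast Finset.card_le_card Finset.subset_union_left
  have h3 : i < (d : ℤ) - (F ∪ G).card - 1 := lt_of_lt_of_le hi hdim
  omega
end

section
/- If G is a bipartite graph or a chordal graph, then the complement graph Ḡ has no chord-less cycles of length greater than 4 (i.e., every induced cycle of Ḡ has length at most 4). -/
open Finset

/-! ## Simplicial (reduced, augmented) chain complex and reduced homology -/

variable (K : Type) [Field K]

lemma walk_support_eq {V : Type} {G : SimpleGraph V} {u v : V} (p : G.Walk u v) :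
    p.support = (List.range (p.length + 1)).map p.getVert := by
  induction p with
  | nil => simp [List.range_succ]
  | cons h q ih =>
    simp [ih, List.range_succ_eq_map, List.map_map, Function.comp_def,
      SimpleGraph.Walk.getVert_cons_succ]

lemma walk_edges_eq {V : Type} {G : SimpleGraph V} {u v : V} (p : G.Walk u v) :
    p.edges = (List.range p.length).map (fun i => s(p.getVert i, p.getVert (i + 1))) := by
  induction p with
  | nil => simp
  | cons h q ih =>
    simp [ih, List.range_succ_eq_map, List.map_map, Function.comp_def,
      SimpleGraph.Walk.getVert_cons_succ]

lemma square_no_chord {V : Type} {G : SimpleGraph V} (hch : IsChordalGraph G)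
    {a b c d : V} (hab : G.Adj a b) (hbc : G.Adj b c) (hcd : G.Adj c d) (hda : G.Adj d a)
    (hac : ¬ G.Adj a c) (hbd : ¬ G.Adj b d) (hac' : a ≠ c) (hbd' : b ≠ d) : False := by
  have n1 : a ≠ b := hab.ne
  have n2 : b ≠ c := hbc.ne
  have n3 : c ≠ d := hcd.ne
  have n4 : d ≠ a := hda.ne
  have hcyc : (SimpleGraph.Walk.cons hab (.cons hbc (.cons hcd (.cons hda .nil)))).IsCycle := by
    rw [SimpleGraph.Walk.isCycle_def]
    refine ⟨?_, by simp, ?_⟩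
    · rw [SimpleGraph.Walk.isTrail_def]
      simp [n1, n2, n3, n4, n1.symm, n2.symm, n3.symm, n4.symm, hac', hbd',
        hac'.symm, hbd'.symm, Sym2.eq_iff]
    · simp [n2, n3, n4, n2.symm, n3.symm, n4.symm, hac', hbd', hac'.symm, hbd'.symm,
        hab.ne', hbc.ne', hcd.ne', hda.ne']
  have hchord := hch _ hcyc (by simp)
  unfold HasChord at hchord
  obtain ⟨x, y, hx, hy, hxy, hne⟩ := hchord
  simp only [SimpleGraph.Walk.support_cons, SimpleGraph.Walk.support_nil, List.mem_cons,
    List.mem_singleton, List.mem_nil_iff, or_false] at hx hy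
  simp only [SimpleGraph.Walk.edges_cons, SimpleGraph.Walk.edges_nil, List.mem_cons,
    List.mem_singleton, List.not_mem_nil, or_false, not_or, Sym2.eq_iff] at hne
  have hca : ¬ G.Adj c a := fun h => hac h.symm
  have hdb : ¬ G.Adj d b := fun h => hbd h.symm
  rcases hx with rfl | rfl | rfl | rfl | rfl <;>
    rcases hy with rfl | rfl | rfl | rfl | rfl <;>
      simp_all [SimpleGraph.irrefl]

lemma pentagon_no_chord {V : Type} {G : SimpleGraph V} (hch : IsChordalGraph G)
    {a b c d e : V} (hab : G.Adj a b) (hbc : G.Adj b c) (hcd : G.Adj c d)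
    (hde : G.Adj d e) (hea : G.Adj e a)
    (hac : ¬ G.Adj a c) (had : ¬ G.Adj a d) (hbd : ¬ G.Adj b d)
    (hbe : ¬ G.Adj b e) (hce : ¬ G.Adj c e)
    (hac' : a ≠ c) (had' : a ≠ d) (hbd' : b ≠ d) (hbe' : b ≠ e) (hce' : c ≠ e) : False := by
  have n1 : a ≠ b := hab.ne
  have n2 : b ≠ c := hbc.ne
  have n3 : c ≠ d := hcd.ne
  have n4 : d ≠ e := hde.ne
  have n5 : e ≠ a := hea.ne
  have hcyc : (SimpleGraph.Walk.cons hab (.cons hbc (.cons hcd (.cons hde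
      (.cons hea .nil))))).IsCycle := by
    rw [SimpleGraph.Walk.isCycle_def]
    refine ⟨?_, by simp, ?_⟩
    · rw [SimpleGraph.Walk.isTrail_def]
      simp [n1, n2, n3, n4, n5, n1.symm, n2.symm, n3.symm, n4.symm, n5.symm, hac', hbd',
        hac'.symm, hbd'.symm, had', had'.symm, hbe', hbe'.symm, hce', hce'.symm, Sym2.eq_iff]
    · simp [n2, n3, n4, n5, n2.symm, n3.symm, n4.symm, n5.symm, hac', hbd', hac'.symm,
        hbd'.symm, had', had'.symm, hbe', hbe'.symm, hce', hce'.symm,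
        hab.ne', hbc.ne', hcd.ne', hde.ne', hea.ne']
  have hchord := hch _ hcyc (by simp)
  unfold HasChord at hchord
  obtain ⟨x, y, hx, hy, hxy, hne⟩ := hchord
  simp only [SimpleGraph.Walk.support_cons, SimpleGraph.Walk.support_nil, List.mem_cons,
    List.mem_singleton, List.mem_nil_iff, or_false] at hx hy
  simp only [SimpleGraph.Walk.edges_cons, SimpleGraph.Walk.edges_nil, List.mem_cons,
    List.mem_singleton, List.not_mem_nil, or_false, not_or, Sym2.eq_iff] at hne
  have hca : ¬ G.Adj c a := fun h => hac h.symm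
  have hda : ¬ G.Adj d a := fun h => had h.symm
  have hdb : ¬ G.Adj d b := fun h => hbd h.symm
  have heb : ¬ G.Adj e b := fun h => hbe h.symm
  have hec : ¬ G.Adj e c := fun h => hce h.symm
  rcases hx with rfl | rfl | rfl | rfl | rfl | rfl <;>
    rcases hy with rfl | rfl | rfl | rfl | rfl | rfl <;>
      simp_all [SimpleGraph.irrefl]

/-- If `G` is bipartite or chordal, then the complement `Ḡ` has no chordless cycles of
length greater than `4`: every cycle of `Ḡ` of length `> 4` has a chord. -/
theorem complement_no_long_chordless_cycles {V : Type} (G : SimpleGraph V)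
    (h : IsBipartite G ∨ IsChordalGraph G) :
    ∀ ⦃v : V⦄ (c : Gᶜ.Walk v v), c.IsCycle → 4 < c.length → HasChord c := by
  intro v c hc hm
  by_contra hnc
  unfold HasChord at hnc
  push_neg at hnc
  have hm0 : 0 < c.length := by omega
  have hinj : ∀ i j, i < c.length → j < c.length → c.getVert i = c.getVert j → i = j := by
    have hnd := hc.support_nodup
    rw [walk_support_eq, List.range_succ_eq_map, List.map_cons, List.tail_cons,
      List.map_map] at hnd
    have H := List.inj_on_of_nodup_map hnd
    intro i j hi hj hij
    have key : ∀ k, k < c.length →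
        c.getVert (Nat.succ ((if k = 0 then c.length else k) - 1)) = c.getVert k := by
      intro k hk
      have hs : Nat.succ ((if k = 0 then c.length else k) - 1)
          = if k = 0 then c.length else k := by split <;> omega
      rw [hs]
      by_cases h0 : k = 0
      · subst h0
        rw [if_pos rfl, SimpleGraph.Walk.getVert_length, SimpleGraph.Walk.getVert_zero]
      · rw [if_neg h0]
    have hi' : (if i = 0 then c.length else i) - 1 ∈ List.range c.length := by
      rw [List.mem_range]; split <;> omega
    have hj' : (if j = 0 then c.length else j) - 1 ∈ List.range c.length := by
      rw [List.mem_range]; split <;> omega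
    have heq := H hi' hj' (by
      rw [Function.comp_apply, Function.comp_apply, key i hi, key j hj]; exact hij)
    split_ifs at heq <;> omega
  have hedge : ∀ x y : V, s(x, y) ∈ c.edges →
      ∃ k, k < c.length ∧ s(x, y) = s(c.getVert k, c.getVert (k + 1)) := by
    intro x y hxy
    rw [walk_edges_eq] at hxy
    simp only [List.mem_map, List.mem_range] at hxy
    obtain ⟨k, hk, hke⟩ := hxy
    exact ⟨k, hk, hke.symm⟩
  have hadjC : ∀ i, i < c.length →
      Gᶜ.Adj (c.getVert i) (c.getVert ((i + 1) % c.length)) := by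
    intro i hi
    have hadj := c.adj_getVert_succ hi
    rcases Nat.lt_or_ge (i + 1) c.length with h1 | h1
    · rwa [Nat.mod_eq_of_lt h1]
    · have h2 : i + 1 = c.length := by omega
      have h3 : (i + 1) % c.length = 0 := by rw [h2]; exact Nat.mod_self _
      rw [h3, SimpleGraph.Walk.getVert_zero]
      rw [h2, SimpleGraph.Walk.getVert_length] at hadj
      exact hadj
  have hnadj : ∀ i, i < c.length →
      ¬ G.Adj (c.getVert i) (c.getVert ((i + 1) % c.length)) :=
    fun i hi => ((G.compl_adj _ _).mp (hadjC i hi)).2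
  have hadjG : ∀ i j, i < c.length → j < c.length → i ≠ j →
      j ≠ (i + 1) % c.length → i ≠ (j + 1) % c.length →
      G.Adj (c.getVert i) (c.getVert j) := by
    intro i j hi hj hij hj1 hi1
    by_contra hG
    have hne : c.getVert i ≠ c.getVert j := fun hh => hij (hinj _ _ hi hj hh)
    have hcadj : Gᶜ.Adj (c.getVert i) (c.getVert j) := (G.compl_adj _ _).mpr ⟨hne, hG⟩
    have hsi : c.getVert i ∈ c.support :=
      SimpleGraph.Walk.mem_support_iff_exists_getVert.mpr ⟨i, rfl, by omega⟩
    have hsj : c.getVert j ∈ c.support :=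
      SimpleGraph.Walk.mem_support_iff_exists_getVert.mpr ⟨j, rfl, by omega⟩
    obtain ⟨k, hk, hke⟩ := hedge _ _ (hnc _ _ hsi hsj hcadj)
    have hk1 : c.getVert (k + 1) = c.getVert ((k + 1) % c.length) := by
      rcases Nat.lt_or_ge (k + 1) c.length with h1 | h1
      · rw [Nat.mod_eq_of_lt h1]
      · have h2 : k + 1 = c.length := by omega
        have h3 : (k + 1) % c.length = 0 := by rw [h2]; exact Nat.mod_self _
        rw [h3, SimpleGraph.Walk.getVert_zero, h2, SimpleGraph.Walk.getVert_length]
    have hkm : (k + 1) % c.length < c.length := Nat.mod_lt _ hm0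
    rw [Sym2.eq_iff] at hke
    rcases hke with ⟨h1, h2⟩ | ⟨h1, h2⟩
    · have hik : i = k := hinj _ _ hi hk h1
      have hjk : j = (k + 1) % c.length := hinj _ _ hj hkm (h2.trans hk1)
      exact hj1 (by rw [hik]; exact hjk)
    · have hjk : j = k := hinj _ _ hj hk h2
      have hik : i = (k + 1) % c.length := hinj _ _ hi hkm (h1.trans hk1)
      exact hi1 (by rw [hjk]; exact hik)
  have hne' : ∀ i j, i < c.length → j < c.length → i ≠ j →
      c.getVert i ≠ c.getVert j := fun i j hi hj hij hh => hij (hinj _ _ hi hj hh)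
  rcases h with ⟨f, hf⟩ | hch
  · -- bipartite
    have hb : ∀ i j, i < c.length → j < c.length → i ≠ j → j ≠ (i + 1) % c.length →
        i ≠ (j + 1) % c.length → f (c.getVert j) = ! f (c.getVert i) := by
      intro i j hi hj h1 h2 h3
      have := hf _ _ (hadjG i j hi hj h1 h2 h3)
      revert this
      cases f (c.getVert i) <;> cases f (c.getVert j) <;> simp
    rcases Nat.lt_or_ge c.length 6 with h6 | h6
    · have hL : c.length = 5 := by omega
      rw [hL] at hb
      have e1 := hb 0 2 (by omega) (by omega) (by omega) (by omega) (by omega)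
      have e2 := hb 2 4 (by omega) (by omega) (by omega) (by omega) (by omega)
      have e3 := hb 4 1 (by omega) (by omega) (by omega) (by omega) (by omega)
      have e4 := hb 1 3 (by omega) (by omega) (by omega) (by omega) (by omega)
      have e5 := hb 3 0 (by omega) (by omega) (by omega) (by omega) (by omega)
      rw [e4, e3, e2, e1] at e5
      simp at e5
    · have e1 := hb 0 2 (by omega) (by omega) (by omega)
        (by rw [Nat.mod_eq_of_lt (by omega)]; omega)
        (by rw [Nat.mod_eq_of_lt (by omega)]; omega)
      have e2 := hb 2 4 (by omega) (by omega) (by omega)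
        (by rw [Nat.mod_eq_of_lt (by omega)]; omega)
        (by rw [Nat.mod_eq_of_lt (by omega)]; omega)
      have e3 := hb 0 4 (by omega) (by omega) (by omega)
        (by rw [Nat.mod_eq_of_lt (by omega)]; omega)
        (by rw [Nat.mod_eq_of_lt (by omega)]; omega)
      rw [e2, e1] at e3
      simp at e3
  · -- chordal
    rcases Nat.lt_or_ge c.length 6 with h6 | h6
    · have hL : c.length = 5 := by omega
      rw [hL] at hadjG hnadj hne'
      have e02 := hadjG 0 2 (by omega) (by omega) (by omega) (by omega) (by omega)
      have e24 := hadjG 2 4 (by omega) (by omega) (by omega) (by omega) (by omega)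
      have e41 := hadjG 4 1 (by omega) (by omega) (by omega) (by omega) (by omega)
      have e13 := hadjG 1 3 (by omega) (by omega) (by omega) (by omega) (by omega)
      have e30 := hadjG 3 0 (by omega) (by omega) (by omega) (by omega) (by omega)
      have p01 := hnadj 0 (by omega)
      have p12 := hnadj 1 (by omega)
      have p23 := hnadj 2 (by omega)
      have p34 := hnadj 3 (by omega)
      have p40 := hnadj 4 (by omega)
      have n04 := hne' 0 4 (by omega) (by omega) (by omega)
      have n01 := hne' 0 1 (by omega) (by omega) (by omega)
      have n21 := hne' 2 1 (by omega) (by omega) (by omega)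
      have n23 := hne' 2 3 (by omega) (by omega) (by omega)
      have n43 := hne' 4 3 (by omega) (by omega) (by omega)
      norm_num at p01 p12 p23 p34 p40
      rw [SimpleGraph.Walk.getVert_zero] at e02 e30 n04 n01
      exact pentagon_no_chord hch e02 e24 e41 e13 e30
        (fun hh => p40 hh.symm) p01 (fun hh => p12 hh.symm) p23 (fun hh => p34 hh.symm)
        n04 n01 n21 n23 n43
    · have e03 := hadjG 0 3 (by omega) (by omega) (by omega)
        (by rw [Nat.mod_eq_of_lt (by omega)]; omega)
        (by rw [Nat.mod_eq_of_lt (by omega)]; omega)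
      have e31 := hadjG 3 1 (by omega) (by omega) (by omega)
        (by rw [Nat.mod_eq_of_lt (by omega)]; omega)
        (by rw [Nat.mod_eq_of_lt (by omega)]; omega)
      have e14 := hadjG 1 4 (by omega) (by omega) (by omega)
        (by rw [Nat.mod_eq_of_lt (by omega)]; omega)
        (by rw [Nat.mod_eq_of_lt (by omega)]; omega)
      have e40 := hadjG 4 0 (by omega) (by omega) (by omega)
        (by rw [Nat.mod_eq_of_lt (by omega)]; omega)
        (by rw [Nat.mod_eq_of_lt (by omega)]; omega)
      have p01 : ¬ G.Adj (c.getVert 0) (c.getVert 1) := by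
        have := hnadj 0 (by omega)
        rwa [Nat.mod_eq_of_lt (by omega)] at this
      have p34 : ¬ G.Adj (c.getVert 3) (c.getVert 4) := by
        have := hnadj 3 (by omega)
        rwa [Nat.mod_eq_of_lt (by omega)] at this
      exact square_no_chord hch e03 e31 e14 e40 p01 p34
        (hne' 0 1 (by omega) (by omega) (by omega))
        (hne' 3 4 (by omega) (by omega) (by omega))
end
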